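/- Let a, b, c, d be real constants and suppose (x_n)_{n≥-1}, (y_n)_{n≥-1} solve the constant-coefficient system with x_n ≠ 0 and y_n ≠ 0 for all n. Then for every n ≥ 0, x_{2n} = x_0^{n+1}·(y_{-1}/(x_{-1}·y_0))^n·∏_{s=0}^{n-1} [(c^{2s+1} + d·x_{-1}·y_0·∑_{l=0}^{2s} c^l) / (a^{2s+2} + b·x_0·y_{-1}·∑_{l=0}^{2s+1} a^l)]. -/

import Mathlib

theorem stmt_10 (x y : ℤ → ℝ) (a b c d : ℝ)
    (hx : ∀ n : ℤ, -1 ≤ n → x n ≠ 0) (hy : ∀ n : ℤ, -1 ≤ n → y n ≠ 0)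
    (hda : ∀ n : ℕ, a + b * (x n * y ((n : ℤ) - 1)) ≠ 0)
    (hdc : ∀ n : ℕ, c + d * (x ((n : ℤ) - 1) * y n) ≠ 0)
    (hxe : ∀ n : ℕ, x ((n : ℤ) + 1) =
      x n * y ((n : ℤ) - 1) / (y n * (a + b * (x n * y ((n : ℤ) - 1)))))
    (hye : ∀ n : ℕ, y ((n : ℤ) + 1) =
      x ((n : ℤ) - 1) * y n / (x n * (c + d * (x ((n : ℤ) - 1) * y n)))) :
    ∀ n : ℕ, x (2 * (n : ℤ)) =
      x 0 ^ (n + 1) * (y (-1) / (x (-1) * y 0)) ^ n *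
        ∏ s ∈ Finset.range n,
          (c ^ (2 * s + 1) + d * x (-1) * y 0 * ∑ l ∈ Finset.range (2 * s + 1), c ^ l) /
          (a ^ (2 * s + 2) + b * x 0 * y (-1) * ∑ l ∈ Finset.range (2 * s + 2), a ^ l) := by
  have hU : ∀ n : ℕ, x n * y ((n:ℤ)-1) *
      (a^n + b*(x 0 * y (-1)) * ∑ l ∈ Finset.range n, a^l) = x 0 * y (-1) := by
    intro n
    induction n with
    | zero => norm_num
    | succ n ih =>
      have hyn : y n ≠ 0 := hy n (by omega)
      have hxn : x n ≠ 0 := hx n (by omega)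
      have hyn1 : y ((n:ℤ)-1) ≠ 0 := hy _ (by omega)
      have hd := hda n
      have e1 : ((n+1:ℕ):ℤ) = (n:ℤ)+1 := by push_cast; ring
      have e2 : ((n:ℤ)+1)-1 = (n:ℤ) := by ring
      rw [e1, e2, hxe n, Finset.sum_range_succ']
      simp only [pow_succ, ← Finset.sum_mul, pow_zero]
      field_simp
      rw [div_eq_iff (by contrapose! hd; linear_combination hd)]
      linear_combination a * ih
  have hV : ∀ n : ℕ, x ((n:ℤ)-1) * y n *
      (c^n + d*(x (-1) * y 0) * ∑ l ∈ Finset.range n, c^l) = x (-1) * y 0 := by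
    intro n
    induction n with
    | zero => norm_num
    | succ n ih =>
      have hyn : y n ≠ 0 := hy n (by omega)
      have hxn : x n ≠ 0 := hx n (by omega)
      have hxn1 : x ((n:ℤ)-1) ≠ 0 := hx _ (by omega)
      have hd := hdc n
      have e1 : ((n+1:ℕ):ℤ) = (n:ℤ)+1 := by push_cast; ring
      have e2 : ((n:ℤ)+1)-1 = (n:ℤ) := by ring
      rw [e1, e2, hye n, Finset.sum_range_succ']
      simp only [pow_succ, ← Finset.sum_mul, pow_zero]
      field_simp
      rw [div_eq_iff (by contrapose! hd; linear_combination hd)]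
      linear_combination c * ih
  have hxm1 : x (-1) ≠ 0 := hx _ (by omega)
  have hy0 : y 0 ≠ 0 := hy 0 (by omega)
  have hx0 : x 0 ≠ 0 := hx 0 (by omega)
  have hym1 : y (-1) ≠ 0 := hy _ (by omega)
  intro n
  induction n with
  | zero => simp
  | succ n ih =>
    -- closed forms at the needed indices
    have hU2 := hU (2*n+2)
    have hV2 := hV (2*n+1)
    have eU : (((2*n+2:ℕ)):ℤ) = 2*(n:ℤ)+2 := by push_cast; ring
    have eU' : (((2*n+2:ℕ)):ℤ) - 1 = 2*(n:ℤ)+1 := by push_cast; ring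
    have eV : (((2*n+1:ℕ)):ℤ) = 2*(n:ℤ)+1 := by push_cast; ring
    have eV' : (((2*n+1:ℕ)):ℤ) - 1 = 2*(n:ℤ) := by push_cast; ring
    rw [eU', eU] at hU2
    rw [eV', eV] at hV2
    have hx2n : x (2*(n:ℤ)) ≠ 0 := hx _ (by omega)
    have hy2n1 : y (2*(n:ℤ)+1) ≠ 0 := hy _ (by omega)
    have hDa : a^(2*n+2) + b * x 0 * y (-1) * ∑ l ∈ Finset.range (2*n+2), a^l ≠ 0 := by
      intro h
      have h0 : a^(2*n+2) + b*(x 0 * y (-1)) * ∑ l ∈ Finset.range (2*n+2), a^l = 0 := by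
        linear_combination h
      rw [h0, mul_zero] at hU2
      exact (mul_ne_zero hx0 hym1) hU2.symm
    have hDc : c^(2*n+1) + d * x (-1) * y 0 * ∑ l ∈ Finset.range (2*n+1), c^l ≠ 0 := by
      intro h
      have h0 : c^(2*n+1) + d*(x (-1) * y 0) * ∑ l ∈ Finset.range (2*n+1), c^l = 0 := by
        linear_combination h
      rw [h0, mul_zero] at hV2
      exact (mul_ne_zero hxm1 hy0) hV2.symm
    have key : x (2*(n:ℤ)+2) * ((x (-1) * y 0) *
          (a^(2*n+2) + b * x 0 * y (-1) * ∑ l ∈ Finset.range (2*n+2), a^l)) =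
        x (2*(n:ℤ)) * ((x 0 * y (-1)) *
          (c^(2*n+1) + d * x (-1) * y 0 * ∑ l ∈ Finset.range (2*n+1), c^l)) := by
      linear_combination (x (2*(n:ℤ)) *
          (c^(2*n+1) + d * x (-1) * y 0 * ∑ l ∈ Finset.range (2*n+1), c^l)) * hU2 -
        (x (2*(n:ℤ)+2) *
          (a^(2*n+2) + b * x 0 * y (-1) * ∑ l ∈ Finset.range (2*n+2), a^l)) * hV2
    have step : x (2*(n:ℤ)+2) = x (2*(n:ℤ)) * ((x 0 * y (-1)) *
          (c^(2*n+1) + d * x (-1) * y 0 * ∑ l ∈ Finset.range (2*n+1), c^l)) /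
        ((x (-1) * y 0) *
          (a^(2*n+2) + b * x 0 * y (-1) * ∑ l ∈ Finset.range (2*n+2), a^l)) := by
      rw [eq_div_iff (mul_ne_zero (mul_ne_zero hxm1 hy0) hDa)]
      linear_combination key
    have e3 : 2*((n+1:ℕ):ℤ) = 2*(n:ℤ)+2 := by push_cast; ring
    have aux : (x 0 * y (-1)) *
          (c^(2*n+1) + d * x (-1) * y 0 * ∑ l ∈ Finset.range (2*n+1), c^l) /
        ((x (-1) * y 0) *
          (a^(2*n+2) + b * x 0 * y (-1) * ∑ l ∈ Finset.range (2*n+2), a^l)) =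
        x 0 * (y (-1) / (x (-1) * y 0)) *
        ((c^(2*n+1) + d * x (-1) * y 0 * ∑ l ∈ Finset.range (2*n+1), c^l) /
         (a^(2*n+2) + b * x 0 * y (-1) * ∑ l ∈ Finset.range (2*n+2), a^l)) := by
      field_simp
    rw [e3, step, ih, mul_div_assoc, aux, Finset.prod_range_succ, pow_succ, pow_succ]
    ring
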